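/- Let X be the cosimplicial simplicial set with X^k the 0-skeleton of Δ[k] (so X^k is the discrete simplicial set on k+1 points), and let L X be its left Kan extension along the diagonal embedding Δ → Δ². Then (L X)^{(1,1)} is the 0-skeleton of Δ[1] × Δ[1], a discrete simplicial set with 4 points; in particular (L X)^{(1,1)} has 4 connected components while X¹ has 2, so the unit map X → diag(L X) is not degreewise a weak homotopy equivalence after applying L in bidegree (1,1) compared to the constant-in-second-variable extension W^{(p,q)} = X^p. -/

import Mathlib

open CategoryTheory CategoryTheory.Limits

/-- The diagonal embedding `D : Δ → Δ²`. -/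
def diagEmbedding2 : SimplexCategory ⥤ (Fin 2 → SimplexCategory) :=
  Functor.pi' fun _ => 𝟭 SimplexCategory

/-- The discrete (constant) simplicial set on a type `S`. -/
def discreteSSet (S : Type) : SSet :=
  (Functor.const SimplexCategoryᵒᵖ).obj S

/-- The cosimplicial simplicial set `X` with `X^k` the `0`-skeleton of `Δ[k]`, i.e. the
discrete simplicial set on the `k+1` vertices of `Δ[k]`. -/
def skelZero : SimplexCategory ⥤ SSet where
  obj k := discreteSSet (Fin (k.len + 1))
  map f := (Functor.const SimplexCategoryᵒᵖ).map (TypeCat.ofHom fun x => f.toOrderHom x)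

namespace LeftKanAux

/-- The candidate left Kan extension: in bidegree `(p,q)` the discrete simplicial set
on `(p+1)(q+1)` points. -/
def LK : (Fin 2 → SimplexCategory) ⥤ SSet where
  obj p := discreteSSet (Fin ((p 0).len + 1) × Fin ((p 1).len + 1))
  map f := (Functor.const SimplexCategoryᵒᵖ).map
    (TypeCat.ofHom fun x => ((f 0).toOrderHom x.1, (f 1).toOrderHom x.2))

/-- The unit of the left Kan extension. -/
def ηK : skelZero ⟶ diagEmbedding2 ⋙ LK where
  app k := (Functor.const SimplexCategoryᵒᵖ).map (TypeCat.ofHom fun v => (v, v))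

/-- A pair of vertices as a dependent function over `Fin 2`. -/
def vertexPair (p : Fin 2 → SimplexCategory) (a : Fin ((p 0).len + 1))
    (b : Fin ((p 1).len + 1)) : ∀ i, Fin ((p i).len + 1) := fun i =>
  match i with
  | ⟨0, _⟩ => a
  | ⟨1, _⟩ => b

/-- The object of the comma category given by a pair of vertices. -/
def ptObj (p : Fin 2 → SimplexCategory) (a : Fin ((p 0).len + 1))
    (b : Fin ((p 1).len + 1)) : CostructuredArrow diagEmbedding2 p :=
  CostructuredArrow.mk (show diagEmbedding2.obj (SimplexCategory.mk 0) ⟶ p from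
    fun i => SimplexCategory.const (SimplexCategory.mk 0) (p i) (vertexPair p a b i))

def ptHom (p : Fin 2 → SimplexCategory) (j : CostructuredArrow diagEmbedding2 p)
    (v : Fin (j.left.len + 1)) :
    ptObj p ((j.hom 0).toOrderHom v) ((j.hom 1).toOrderHom v) ⟶ j :=
  CostructuredArrow.homMk (SimplexCategory.const (SimplexCategory.mk 0) j.left v) (by
    funext i
    match i with
    | ⟨0, _⟩ => rfl
    | ⟨1, _⟩ => rfl)

def isColimitAt (p : Fin 2 → SimplexCategory) (n : SimplexCategoryᵒᵖ) :
    IsColimit (((evaluation SimplexCategoryᵒᵖ (Type)).obj n).mapCocone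
      ((Functor.LeftExtension.mk LK ηK).coconeAt p)) where
  desc s := TypeCat.ofHom fun ab => s.ι.app (ptObj p ab.1 ab.2) ((0 : Fin 1) : _)
  fac s j := by
    ext v
    have h := ConcreteCategory.congr_hom (s.w (ptHom p j v)) ((0 : Fin 1) : _)
    dsimp [LK, ηK, skelZero] at h ⊢
    exact h.symm
  uniq s m hm := by
    ext ab
    exact ConcreteCategory.congr_hom (hm (ptObj p ab.1 ab.2)) ((0 : Fin 1) : _)

def isPointwise : (Functor.LeftExtension.mk LK ηK).IsPointwiseLeftKanExtension :=
  fun p => evaluationJointlyReflectsColimits _ (fun n => isColimitAt p n)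

instance : LK.IsLeftKanExtension ηK := isPointwise.isLeftKanExtension

end LeftKanAux

theorem leftKan_skelZero_bidegree_one_one
    (LX : (Fin 2 → SimplexCategory) ⥤ SSet)
    (η : skelZero ⟶ diagEmbedding2 ⋙ LX)
    [LX.IsLeftKanExtension η] :
    Nonempty (LX.obj (fun _ => SimplexCategory.mk 1) ≅ discreteSSet (Fin 4)) ∧
    Nonempty (skelZero.obj (SimplexCategory.mk 1) ≅ discreteSSet (Fin 2)) ∧
    ¬ Nonempty (LX.obj (fun _ => SimplexCategory.mk 1) ≅ skelZero.obj (SimplexCategory.mk 1)) := by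
  have e : LX ≅ LeftKanAux.LK := Functor.leftKanExtensionUnique LX η LeftKanAux.LK LeftKanAux.ηK
  have e4 : LX.obj (fun _ => SimplexCategory.mk 1) ≅ discreteSSet (Fin 4) :=
    e.app (fun _ => SimplexCategory.mk 1) ≪≫
      (Functor.const SimplexCategoryᵒᵖ).mapIso
        (Equiv.toIso (finProdFinEquiv (m := 2) (n := 2)))
  refine ⟨⟨e4⟩, ⟨Iso.refl _⟩, ?_⟩
  rintro ⟨f⟩
  have c : discreteSSet (Fin 4) ≅ discreteSSet (Fin 2) := e4.symm ≪≫ f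
  have eq : Fin 4 ≃ Fin 2 := (c.app (Opposite.op (SimplexCategory.mk 0))).toEquiv
  simpa using Fintype.card_congr eq
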